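/- Let r > 0, 0 < p < 1, and n be a non-negative integer. Let W be a random variable taking values in {0,1,...,n}, and suppose there is a constant C ≥ 0 such that for every bounded function g : ℕ → ℝ, | E[ p(r+W)·g(W+1) − W·g(W) ] | ≤ C · sup_{i ∈ ℕ} | g(i+1) − g(i) |. Then d_TV( L(W), NB^{[0,n]}(r,p) ) ≤ C·(1 − π_0)/(p·r) ≤ C·(1 − (1−p)^r)/(p·r), where π_0 = P(Z = 0)/P(Z ≤ n) for Z ~ NB(r,p). -/

import Mathlib

/-- The negative binomial pmf: `P(Z = k)` for `Z ~ NB(r,p)`. -/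
noncomputable def nbPmf (r p : ℝ) (k : ℕ) : ℝ :=
  Real.Gamma (r + k) / (Real.Gamma r * k.factorial) * (1 - p) ^ r * p ^ k

/-- The truncated negative binomial pmf on `{0,...,n}`:
`π_i = P(Z = i) / P(Z ≤ n)` for `Z ~ NB(r,p)`. -/
noncomputable def truncNbPmf (r p : ℝ) (n i : ℕ) : ℝ :=
  nbPmf r p i / ∑ j ∈ Finset.range (n + 1), nbPmf r p j


open MeasureTheory

lemma nbPmf_pos {r p : ℝ} (hr : 0 < r) (hp0 : 0 < p) (hp1 : p < 1) (k : ℕ) :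
    0 < nbPmf r p k := by
  unfold nbPmf
  have h1 : (0:ℝ) < Real.Gamma (r + k) := Real.Gamma_pos_of_pos (by positivity)
  have h2 : (0:ℝ) < Real.Gamma r := Real.Gamma_pos_of_pos hr
  have h3 : (0:ℝ) < (1 - p) ^ r := Real.rpow_pos_of_pos (by linarith) r
  positivity

lemma nbPmf_rec {r p : ℝ} (hr : 0 < r) (k : ℕ) :
    ((k:ℝ) + 1) * nbPmf r p (k+1) = p * (r + k) * nbPmf r p k := by
  unfold nbPmf
  have hΓ : Real.Gamma (r + (k+1:ℕ)) = (r + k) * Real.Gamma (r + k) := by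
    have : r + ((k:ℝ)+1) = (r + k) + 1 := by ring
    rw [show ((k+1:ℕ):ℝ) = (k:ℝ)+1 by push_cast; ring, this,
      Real.Gamma_add_one (by positivity)]
  rw [hΓ]
  have hfac : ((k+1).factorial : ℝ) = ((k:ℝ)+1) * (k.factorial : ℝ) := by
    rw [Nat.factorial_succ]; push_cast; ring
  rw [hfac]
  have h2 : Real.Gamma r ≠ 0 := ne_of_gt (Real.Gamma_pos_of_pos hr)
  have h4 : ((k.factorial : ℝ)) ≠ 0 := by positivity
  field_simp
  ring



lemma poly_identity (r : ℝ) (a : ℕ → ℝ)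
    (hrec : ∀ k : ℕ, ((k:ℝ)+1) * a (k+1) = (r + k) * a k) (N : ℕ) (x : ℝ) :
    (1-x) * (∑ k ∈ Finset.range (N+1), a k * ((k:ℝ) * x^(k-1)))
      - r * (∑ k ∈ Finset.range (N+1), a k * x^k)
      = -((r + N) * a N * x^N) := by
  induction N with
  | zero => simp
  | succ N ih =>
      rw [Finset.sum_range_succ (f := fun k => a k * ((k:ℝ) * x^(k-1))),
        Finset.sum_range_succ (f := fun k => a k * x^k)]
      have hx : x ^ (N + 1 - 1) = x ^ N := by norm_num
      rw [hx, Nat.cast_succ]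
      linear_combination ih + (x^N) * hrec N

lemma sum_nbPmf_le_one {r p : ℝ} (hr : 0 < r) (hp0 : 0 < p) (hp1 : p < 1) (N : ℕ) :
    ∑ j ∈ Finset.range N, nbPmf r p j ≤ 1 := by
  rcases Nat.eq_zero_or_pos N with hN | hN
  · simp [hN]
  obtain ⟨M, rfl⟩ : ∃ M, N = M + 1 := ⟨N - 1, by omega⟩
  set a : ℕ → ℝ := fun k => Real.Gamma (r + k) / (Real.Gamma r * k.factorial) with ha
  have hΓr : (0:ℝ) < Real.Gamma r := Real.Gamma_pos_of_pos hr
  have ha_pos : ∀ k, 0 < a k := fun k => by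
    have : (0:ℝ) < Real.Gamma (r + k) := Real.Gamma_pos_of_pos (by positivity)
    have : (0:ℝ) < (k.factorial : ℝ) := by positivity
    positivity
  have hrec : ∀ k : ℕ, ((k:ℝ)+1) * a (k+1) = (r + k) * a k := by
    intro k
    have hΓ : Real.Gamma (r + (k+1:ℕ)) = (r + k) * Real.Gamma (r + k) := by
      rw [show ((k+1:ℕ):ℝ) = (k:ℝ)+1 by push_cast; ring,
        show r + ((k:ℝ)+1) = (r + k) + 1 by ring,
        Real.Gamma_add_one (by positivity)]
    simp only [ha]
    rw [hΓ]
    have hfac : ((k+1).factorial : ℝ) = ((k:ℝ)+1) * (k.factorial : ℝ) := by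
      rw [Nat.factorial_succ]; push_cast; ring
    rw [hfac]
    have h4 : ((k.factorial : ℝ)) ≠ 0 := by positivity
    field_simp
  set h : ℝ → ℝ := fun x => (1-x)^r * ∑ k ∈ Finset.range (M+1), a k * x^k with hh
  have hanti : AntitoneOn h (Set.Icc 0 p) := by
    have hderiv : ∀ x : ℝ, x ∈ Set.Ioo (0:ℝ) p →
        HasDerivAt h ((r * (1-x)^(r-1) * (-1)) * (∑ k ∈ Finset.range (M+1), a k * x^k)
          + (1-x)^r * (∑ k ∈ Finset.range (M+1), a k * ((k:ℝ) * x^(k-1)))) x := by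
      intro x hx
      have hx1 : (0:ℝ) < 1 - x := by have := hx.2; linarith
      have hbase : HasDerivAt (fun y : ℝ => 1 - y) (-1) x := (hasDerivAt_id x).const_sub 1
      have h1 : HasDerivAt (fun y : ℝ => (1-y)^r) (r * (1-x)^(r-1) * (-1)) x := by
        have := (Real.hasDerivAt_rpow_const (x := 1 - x) (p := r)
          (Or.inl (ne_of_gt hx1))).comp x hbase
        simpa [Function.comp_def] using this
      have h2 : HasDerivAt (fun y : ℝ => ∑ k ∈ Finset.range (M+1), a k * y^k)
          (∑ k ∈ Finset.range (M+1), a k * ((k:ℝ) * x^(k-1))) x :=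
        HasDerivAt.fun_sum fun k _ => (hasDerivAt_pow k x).const_mul (a k)
      exact h1.mul h2
    apply antitoneOn_of_deriv_nonpos (convex_Icc 0 p)
    · apply ContinuousOn.mul
      · apply ContinuousOn.rpow_const (by fun_prop)
        intro x hx
        exact Or.inr hr.le
      · exact (continuous_finset_sum _ fun i _ => continuous_const.mul (continuous_pow i)).continuousOn
    · rw [interior_Icc]
      exact fun x hx => ((hderiv x hx).differentiableAt).differentiableWithinAt
    · rw [interior_Icc]
      intro x hx
      rw [(hderiv x hx).deriv]
      have hx1 : (0:ℝ) < 1 - x := by have := hx.2; linarith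
      have key := poly_identity r a hrec M x
      have hsplit : (1-x)^r = (1-x)^(r-1) * (1-x) := by
        rw [← Real.rpow_add_one (ne_of_gt hx1)]; norm_num
      rw [hsplit]
      have : r * (1-x)^(r-1) * (-1) * (∑ k ∈ Finset.range (M+1), a k * x^k)
          + (1-x)^(r-1) * (1-x) * (∑ k ∈ Finset.range (M+1), a k * ((k:ℝ) * x^(k-1)))
          = (1-x)^(r-1) * (-((r + M) * a M * x^M)) := by
        rw [← key]; ring
      rw [this]
      rw [mul_neg, neg_nonpos]
      have h5 : (0:ℝ) ≤ (1-x)^(r-1) := (Real.rpow_pos_of_pos hx1 _).le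
      have h6 : (0:ℝ) ≤ x^M := pow_nonneg hx.1.le M
      have h7 : (0:ℝ) ≤ a M := (ha_pos M).le
      have h8 : (0:ℝ) ≤ r + M := by positivity
      positivity
  have hmem0 : (0:ℝ) ∈ Set.Icc (0:ℝ) p := ⟨le_refl 0, hp0.le⟩
  have hmemp : p ∈ Set.Icc (0:ℝ) p := ⟨hp0.le, le_refl p⟩
  have := hanti hmem0 hmemp hp0.le
  have hh0 : h 0 = 1 := by
    simp only [hh]
    rw [Finset.sum_eq_single_of_mem 0 (Finset.mem_range.2 (Nat.succ_pos M))
      (fun b _ hb => by simp [zero_pow hb])]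
    simp [ha, Real.Gamma_pos_of_pos hr, ne_of_gt hΓr]
  have hhp : h p = ∑ j ∈ Finset.range (M+1), nbPmf r p j := by
    simp only [hh, nbPmf, Finset.mul_sum, ha]
    exact Finset.sum_congr rfl fun j _ => by ring
  rw [← hhp, ← hh0]
  exact this



section Aux
variable {r p : ℝ} {w : ℕ → ℝ}

lemma Lu (hr : 0 < r) (hp0 : 0 < p) (hp1 : p < 1) (hw : ∀ k, 0 < w k)
    (hrec : ∀ k : ℕ, ((k:ℝ)+1) * w (k+1) = p * (r + k) * w k) :
    ∀ k : ℕ, 1 ≤ k →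
      p * (r + k) * (∑ i ∈ Finset.range k, w i) ≤ (k:ℝ) * ∑ i ∈ Finset.range (k+1), w i := by
  intro k hk
  induction k, hk using Nat.le_induction with
  | base =>
      have h0 := hrec 0
      simp only [Nat.cast_zero, zero_add, add_zero, one_mul] at h0
      simp only [Finset.range_one, Finset.sum_singleton, Nat.cast_one, one_mul,
        Finset.sum_range_succ, Finset.sum_range_one]
      nlinarith [mul_le_of_le_one_left (hw 0).le hp1.le, hw 0, hr]
  | succ k hk ih =>
      rw [Finset.sum_range_succ (n := k+1)]
      rw [Finset.sum_range_succ (n := k)] at ih ⊢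
      set Fk := ∑ i ∈ Finset.range k, w i with hFk
      set Q := Fk + w k with hQ
      have hQ0 : (0:ℝ) ≤ Q := by
        have : (0:ℝ) ≤ Fk := Finset.sum_nonneg fun i _ => (hw i).le
        have := (hw k).le
        simp only [hQ]; linarith
      have hpQ : p * Q ≤ Q := mul_le_of_le_one_left hQ0 hp1.le
      have hk' := hrec k
      push_cast
      have expand : p * (r + ((k:ℝ)+1)) * Q = p * (r + (k:ℝ)) * Fk + p * (r + (k:ℝ)) * w k + p * Q := by
        simp only [hQ]; ring
      have expand2 : ((k:ℝ)+1) * (Q + w (k+1)) = (k:ℝ) * Q + Q + ((k:ℝ)+1) * w (k+1) := by ring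
      rw [expand, expand2]
      linarith [ih, hpQ, hk']

lemma Lv (hr : 0 < r) (hp0 : 0 < p) (hp1 : p < 1) (hw : ∀ k, 0 < w k)
    (hrec : ∀ k : ℕ, ((k:ℝ)+1) * w (k+1) = p * (r + k) * w k) (n : ℕ) :
    ∀ k : ℕ, 1 ≤ k → k ≤ n →
      (k:ℝ) * (∑ i ∈ Finset.Ico (k+1) (n+1), w i)
        ≤ p * (r + k) * (∑ i ∈ Finset.Ico k (n+1), w i) := by
  intro k hk1 hkn
  have h1 : ∑ i ∈ Finset.Ico (k+1) (n+1), w i = ∑ i ∈ Finset.range (n-k), w (k+1+i) := by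
    rw [Finset.sum_Ico_eq_sum_range, show n+1-(k+1) = n-k by omega]
  have h2 : ∑ i ∈ Finset.Ico k n, w i = ∑ i ∈ Finset.range (n-k), w (k+i) := by
    rw [Finset.sum_Ico_eq_sum_range]
  have h3 : ∑ i ∈ Finset.Ico k (n+1), w i = (∑ i ∈ Finset.Ico k n, w i) + w n :=
    Finset.sum_Ico_succ_top hkn _
  have hterm : ∀ i : ℕ, (k:ℝ) * w (k+1+i) ≤ p * (r + k) * w (k+i) := by
    intro i
    have hrk := hrec (k+i)
    push_cast at hrk
    have hk0 : (0:ℝ) ≤ (k:ℝ) := Nat.cast_nonneg k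
    have hi0 : (0:ℝ) ≤ (i:ℝ) := Nat.cast_nonneg i
    have hkpos : (0:ℝ) < (k:ℝ) + (i:ℝ) + 1 := by positivity
    rw [show k+1+i = (k+i)+1 by omega]
    have hmul : (k:ℝ) * (r + ((k:ℝ)+(i:ℝ))) ≤ ((k:ℝ)+(i:ℝ)+1) * (r + (k:ℝ)) := by
      nlinarith [hr.le, hk0, hi0, mul_nonneg hi0 hr.le, mul_nonneg hk0 hr.le]
    have h1' : ((k:ℝ)+(i:ℝ)+1) * ((k:ℝ) * w ((k+i)+1)) = (k:ℝ) * (p * (r + ((k:ℝ)+(i:ℝ))) * w (k+i)) := by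
      linear_combination (k:ℝ) * hrk
    have key : ((k:ℝ)+(i:ℝ)+1) * ((k:ℝ) * w ((k+i)+1)) ≤ ((k:ℝ)+(i:ℝ)+1) * (p * (r + (k:ℝ)) * w (k+i)) := by
      rw [h1']
      nlinarith [mul_le_mul_of_nonneg_left hmul (mul_pos hp0 (hw (k+i))).le]
    exact le_of_mul_le_mul_left key hkpos
  calc (k:ℝ) * (∑ i ∈ Finset.Ico (k+1) (n+1), w i)
      = ∑ i ∈ Finset.range (n-k), (k:ℝ) * w (k+1+i) := by rw [h1, Finset.mul_sum]
    _ ≤ ∑ i ∈ Finset.range (n-k), p * (r + k) * w (k+i) :=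
        Finset.sum_le_sum fun i _ => hterm i
    _ = p * (r + k) * (∑ i ∈ Finset.Ico k n, w i) := by rw [h2, Finset.mul_sum]
    _ ≤ p * (r + k) * (∑ i ∈ Finset.Ico k (n+1), w i) := by
        rw [h3]
        have hpr : (0:ℝ) < p * (r+(k:ℝ)) := by positivity
        nlinarith [hw n]

lemma Lm (hr : 0 < r) (hp0 : 0 < p) (hp1 : p < 1) (hw : ∀ k, 0 < w k)
    (hrec : ∀ k : ℕ, ((k:ℝ)+1) * w (k+1) = p * (r + k) * w k) :
    ∀ k : ℕ, 1 ≤ k →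
      p * r * (∑ i ∈ Finset.range k, w i)
        ≤ (k:ℝ) * ((∑ i ∈ Finset.range (k+1), w i) - w 0) := by
  intro k hk
  have hshift : (∑ i ∈ Finset.range (k+1), w i) - w 0 = ∑ i ∈ Finset.range k, w (i+1) := by
    rw [Finset.sum_range_succ' w k]; ring
  rw [hshift, Finset.mul_sum, Finset.mul_sum]
  apply Finset.sum_le_sum
  intro i hi
  have hik : i + 1 ≤ k := Finset.mem_range.1 hi
  have hik' : (i:ℝ) + 1 ≤ (k:ℝ) := by exact_mod_cast hik
  have hrk := hrec i
  have hipos : (0:ℝ) < (i:ℝ) + 1 := by positivity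
  have hi0 : (0:ℝ) ≤ (i:ℝ) := Nat.cast_nonneg i
  have hk0 : (0:ℝ) ≤ (k:ℝ) := Nat.cast_nonneg k
  have hmul : r * ((i:ℝ)+1) ≤ (k:ℝ) * (r + (i:ℝ)) := by
    nlinarith [mul_le_mul_of_nonneg_left hik' hr.le, mul_nonneg hk0 hi0]
  have h1' : ((i:ℝ)+1) * ((k:ℝ) * w (i+1)) = (k:ℝ) * (p * (r + (i:ℝ)) * w i) := by
    linear_combination (k:ℝ) * hrk
  have key : ((i:ℝ)+1) * (p * r * w i) ≤ ((i:ℝ)+1) * ((k:ℝ) * w (i+1)) := by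
    rw [h1']
    nlinarith [mul_le_mul_of_nonneg_left hmul (mul_pos hp0 (hw i)).le]
  exact le_of_mul_le_mul_left key hipos

end Aux

section Core
variable {r p : ℝ} {w : ℕ → ℝ}

set_option maxHeartbeats 1600000 in
lemma core_bound (hr : 0 < r) (hp0 : 0 < p) (hp1 : p < 1) (hw : ∀ k, 0 < w k)
    (hrec : ∀ k : ℕ, ((k:ℝ)+1) * w (k+1) = p * (r + k) * w k)
    (n : ℕ) (f : ℕ → ℝ) (hf : ∀ j, |f j| ≤ 1) (m : ℝ)
    (hm : m = (∑ i ∈ Finset.range (n+1), w i * f i) / (∑ i ∈ Finset.range (n+1), w i))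
    (k : ℕ) (hk1 : 1 ≤ k) (hkn : k ≤ n) :
    |(∑ i ∈ Finset.range (k+1), w i * (f i - m)) / (((k+1:ℕ):ℝ) * w (k+1))
      - (∑ i ∈ Finset.range k, w i * (f i - m)) / ((k:ℝ) * w k)|
      ≤ 2 * ((∑ i ∈ Finset.range (n+1), w i) - w 0)
          / ((∑ i ∈ Finset.range (n+1), w i) * (p * r)) := by
  set S := ∑ i ∈ Finset.range (n+1), w i with hSdef
  have hS : 0 < S := Finset.sum_pos (fun i _ => hw i) ⟨0, Finset.mem_range.2 (Nat.succ_pos n)⟩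
  set F : ℕ → ℝ := fun t => ∑ i ∈ Finset.range t, w i with hFdef
  set T : ℕ → ℝ := fun t => ∑ i ∈ Finset.Ico t (n+1), w i with hTdef
  have hFT : ∀ t, t ≤ n+1 → F t + T t = S := fun t ht =>
    Finset.sum_range_add_sum_Ico _ ht
  have hF0 : ∀ t, 0 ≤ F t := fun t => Finset.sum_nonneg fun i _ => (hw i).le
  have hT0 : ∀ t, 0 ≤ T t := fun t => Finset.sum_nonneg fun i _ => (hw i).le
  have hden : ∀ t : ℕ, 1 ≤ t → 0 < (t:ℝ) * w t := fun t ht => by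
    have h1 : (0:ℝ) < (t:ℝ) := by exact_mod_cast ht
    exact mul_pos h1 (hw t)
  set G : ℕ → ℕ → ℝ := fun j t =>
    (w j / S) * (if j < t then T t / ((t:ℝ) * w t) else -(F t / ((t:ℝ) * w t))) with hGdef
  -- the Stein solution expressed via G
  have key1 : ∀ t : ℕ, 1 ≤ t → t ≤ n+1 →
      (∑ i ∈ Finset.range t, w i * (f i - m)) / ((t:ℝ) * w t)
        = ∑ j ∈ Finset.range (n+1), f j * G j t := by
    intro t ht1 htn
    have hd := hden t ht1
    have e1 : ∑ j ∈ Finset.range t, f j * G j t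
        = (∑ j ∈ Finset.range t, w j * f j) * (T t / (S * ((t:ℝ) * w t))) := by
      rw [Finset.sum_mul]
      apply Finset.sum_congr rfl
      intro j hj
      simp only [hGdef, if_pos (Finset.mem_range.1 hj)]
      ring
    have e2 : ∑ j ∈ Finset.Ico t (n+1), f j * G j t
        = -((∑ j ∈ Finset.Ico t (n+1), w j * f j) * (F t / (S * ((t:ℝ) * w t)))) := by
      rw [Finset.sum_mul, ← Finset.sum_neg_distrib]
      apply Finset.sum_congr rfl
      intro j hj
      simp only [hGdef, if_neg (not_lt.2 (Finset.mem_Ico.1 hj).1)]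
      ring
    have hsplit : ∑ j ∈ Finset.range (n+1), f j * G j t
        = (∑ j ∈ Finset.range t, f j * G j t) + ∑ j ∈ Finset.Ico t (n+1), f j * G j t :=
      (Finset.sum_range_add_sum_Ico _ htn).symm
    have hXY : (∑ j ∈ Finset.range t, w j * f j) + ∑ j ∈ Finset.Ico t (n+1), w j * f j
        = ∑ i ∈ Finset.range (n+1), w i * f i :=
      Finset.sum_range_add_sum_Ico _ htn
    have eL : ∑ i ∈ Finset.range t, w i * (f i - m)
        = (∑ j ∈ Finset.range t, w j * f j) - F t * m := by
      simp only [mul_sub]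
      rw [Finset.sum_sub_distrib, ← Finset.sum_mul]
    have hTt : T t = S - F t := by have := hFT t htn; linarith
    set X := ∑ j ∈ Finset.range t, w j * f j with hX
    set Y := ∑ j ∈ Finset.Ico t (n+1), w j * f j with hY
    rw [hsplit, e1, e2, eL, hTt]
    rw [hm, ← hXY]
    field_simp
    ring
  have key2 : ∀ t : ℕ, 1 ≤ t → t ≤ n+1 →
      ∑ j ∈ Finset.range (n+1), G j t = 0 := by
    intro t ht1 htn
    have hsplit : ∑ j ∈ Finset.range (n+1), G j t
        = (∑ j ∈ Finset.range t, G j t) + ∑ j ∈ Finset.Ico t (n+1), G j t :=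
      (Finset.sum_range_add_sum_Ico _ htn).symm
    have e1 : ∑ j ∈ Finset.range t, G j t = F t * (T t / (S * ((t:ℝ) * w t))) := by
      rw [hFdef, Finset.sum_mul]
      apply Finset.sum_congr rfl
      intro j hj
      simp only [hGdef, if_pos (Finset.mem_range.1 hj)]
      ring
    have e2 : ∑ j ∈ Finset.Ico t (n+1), G j t = -(T t * (F t / (S * ((t:ℝ) * w t)))) := by
      rw [hTdef, Finset.sum_mul, ← Finset.sum_neg_distrib]
      apply Finset.sum_congr rfl
      intro j hj
      simp only [hGdef, if_neg (not_lt.2 (Finset.mem_Ico.1 hj).1)]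
      ring
    rw [hsplit, e1, e2]
    ring
  set D : ℕ → ℝ := fun j => G j (k+1) - G j k with hDdef
  have hd1 := hden k hk1
  have hd2 := hden (k+1) (by omega)
  have hreck := hrec k
  have hcast : ((k+1:ℕ):ℝ) = (k:ℝ) + 1 := by push_cast; ring
  -- D j ≤ 0 for j ≠ k
  have hDneg : ∀ j, j ≠ k → D j ≤ 0 := by
    intro j hjk
    rcases lt_or_gt_of_ne hjk with h | h
    · have h' : j < k + 1 := by omega
      have hDj : D j = (w j / S) * (T (k+1) / (((k+1:ℕ):ℝ) * w (k+1)) - T k / ((k:ℝ) * w k)) := by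
        simp only [hDdef, hGdef, if_pos h, if_pos h']
        ring
      rw [hDj]
      apply mul_nonpos_of_nonneg_of_nonpos (div_nonneg (hw j).le hS.le)
      rw [sub_nonpos, div_le_div_iff₀ hd2 hd1]
      have hLv := Lv hr hp0 hp1 hw hrec n k hk1 hkn
      rw [hcast, hreck]
      nlinarith [hw k, hLv]
    · have h' : ¬ (j < k + 1) := by omega
      have h'' : ¬ (j < k) := by omega
      have hDj : D j = (w j / S) * (F k / ((k:ℝ) * w k) - F (k+1) / (((k+1:ℕ):ℝ) * w (k+1))) := by
        simp only [hDdef, hGdef, if_neg h', if_neg h'']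
        ring
      rw [hDj]
      apply mul_nonpos_of_nonneg_of_nonpos (div_nonneg (hw j).le hS.le)
      rw [sub_nonpos, div_le_div_iff₀ hd1 hd2]
      have hLu := Lu hr hp0 hp1 hw hrec k hk1
      rw [hcast, hreck]
      nlinarith [hw k, hLu]
  -- value and bound at j = k
  have hDk_eq : D k = T (k+1) / (S * (p * (r + k))) + F k / (S * (k:ℝ)) := by
    have h1 : D k = (w k / S) * (T (k+1) / (((k+1:ℕ):ℝ) * w (k+1)))
        + (w k / S) * (F k / ((k:ℝ) * w k)) := by
      simp only [hDdef, hGdef, if_pos (Nat.lt_succ_self k), if_neg (lt_irrefl k)]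
      ring
    rw [h1, hcast, hreck]
    have hk0 : (0:ℝ) < (k:ℝ) := by exact_mod_cast hk1
    have hne2 : r + (k:ℝ) ≠ 0 := by positivity
    field_simp [hp0.ne', hne2, (hw k).ne', hS.ne', hk0.ne']
  have hDk0 : 0 ≤ D k := by
    rw [hDk_eq]
    have hprk : (0:ℝ) < p * (r + k) := by positivity
    have hk0 : (0:ℝ) < (k:ℝ) := by exact_mod_cast hk1
    have := hT0 (k+1)
    have := hF0 k
    apply add_nonneg (div_nonneg (hT0 (k+1)) (by positivity)) (div_nonneg (hF0 k) (by positivity))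
  have hDkle : D k ≤ (S - w 0) / (S * (p * r)) := by
    rw [hDk_eq]
    have hprk : (0:ℝ) < p * (r + k) := by positivity
    have hk0 : (0:ℝ) < (k:ℝ) := by exact_mod_cast hk1
    have hpr : (0:ℝ) < p * r := by positivity
    have b1 : T (k+1) / (S * (p * (r + k))) ≤ T (k+1) / (S * (p * r)) := by
      apply div_le_div_of_nonneg_left (hT0 _) (by positivity)
      have hck : (0:ℝ) ≤ (k:ℝ) := by positivity
      nlinarith [mul_nonneg (mul_nonneg hS.le hp0.le) hck]
    have b2 : F k / (S * (k:ℝ)) ≤ (F (k+1) - w 0) / (S * (p * r)) := by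
      rw [div_le_div_iff₀ (by positivity) (by positivity)]
      have hLm := Lm hr hp0 hp1 hw hrec k hk1
      nlinarith [mul_le_mul_of_nonneg_left hLm hS.le]
    have hFTk : F (k+1) + T (k+1) = S := hFT (k+1) (by omega)
    calc T (k+1) / (S * (p * (r + k))) + F k / (S * (k:ℝ))
        ≤ T (k+1) / (S * (p * r)) + (F (k+1) - w 0) / (S * (p * r)) := add_le_add b1 b2
      _ = (T (k+1) + (F (k+1) - w 0)) / (S * (p * r)) := (add_div _ _ _).symm
      _ = (S - w 0) / (S * (p * r)) := by rw [show T (k+1) + (F (k+1) - w 0) = S - w 0 by linarith]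
  -- sum of D is zero
  have hsum0 : ∑ j ∈ Finset.range (n+1), D j = 0 := by
    simp only [hDdef]
    rw [Finset.sum_sub_distrib, key2 (k+1) (by omega) (by omega), key2 k hk1 (by omega)]
    ring
  have hmemk : k ∈ Finset.range (n+1) := Finset.mem_range.2 (by omega)
  have herase : ∑ j ∈ (Finset.range (n+1)).erase k, D j = -(D k) := by
    have h := Finset.sum_erase_add (Finset.range (n+1)) D hmemk
    linarith [hsum0, h]
  have habs_sum : ∑ j ∈ Finset.range (n+1), |D j| = 2 * D k := by
    rw [← Finset.add_sum_erase _ _ hmemk, abs_of_nonneg hDk0]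
    have : ∑ j ∈ (Finset.range (n+1)).erase k, |D j|
        = ∑ j ∈ (Finset.range (n+1)).erase k, -(D j) := by
      apply Finset.sum_congr rfl
      intro j hj
      exact abs_of_nonpos (hDneg j (Finset.mem_erase.1 hj).1)
    rw [this, Finset.sum_neg_distrib, herase]
    ring
  -- final assembly
  rw [key1 (k+1) (by omega) (by omega), key1 k hk1 (by omega)]
  calc |(∑ j ∈ Finset.range (n+1), f j * G j (k+1)) - ∑ j ∈ Finset.range (n+1), f j * G j k|
      = |∑ j ∈ Finset.range (n+1), f j * D j| := by
        rw [← Finset.sum_sub_distrib]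
        congr 1
        apply Finset.sum_congr rfl
        intro j _
        simp only [hDdef]
        ring
    _ ≤ ∑ j ∈ Finset.range (n+1), |f j * D j| := Finset.abs_sum_le_sum_abs _ _
    _ ≤ ∑ j ∈ Finset.range (n+1), |D j| := by
        apply Finset.sum_le_sum
        intro j _
        rw [abs_mul]
        exact mul_le_of_le_one_left (abs_nonneg _) (hf j)
    _ = 2 * D k := habs_sum
    _ ≤ 2 * ((S - w 0) / (S * (p * r))) := by linarith [hDkle]
    _ = 2 * (S - w 0) / (S * (p * r)) := by ring


lemma integral_comp_nat {Ω : Type*} [MeasurableSpace Ω]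
    (μ : Measure Ω) [IsProbabilityMeasure μ]
    (W : Ω → ℕ) (hW : Measurable W) (n : ℕ) (hWn : ∀ ω, W ω ≤ n) (φ : ℕ → ℝ) :
    ∫ ω, φ (W ω) ∂μ = ∑ i ∈ Finset.range (n+1), (μ {ω | W ω = i}).toReal * φ i := by
  have hmeas : ∀ i : ℕ, MeasurableSet {ω | W ω = i} := fun i => hW (measurableSet_singleton i)
  have hfun : (fun ω => φ (W ω))
      = fun ω => ∑ i ∈ Finset.range (n+1),
          Set.indicator {ω' | W ω' = i} (fun _ => φ i) ω := by
    funext ω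
    have h1 : ∀ i : ℕ, Set.indicator {ω' | W ω' = i} (fun _ => φ i) ω
        = if W ω = i then φ i else 0 := by
      intro i
      rw [Set.indicator_apply]
      simp [Set.mem_setOf_eq]
    simp only [h1]
    rw [Finset.sum_ite_eq (Finset.range (n+1)) (W ω) (fun i => φ i),
      if_pos (Finset.mem_range.2 (Nat.lt_succ_of_le (hWn ω)))]
  rw [hfun, MeasureTheory.integral_finset_sum]
  · apply Finset.sum_congr rfl
    intro i _
    rw [MeasureTheory.integral_indicator_const (φ i) (hmeas i), smul_eq_mul]
    rfl
  · intro i _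
    exact (integrable_const (φ i)).indicator (hmeas i)

set_option maxHeartbeats 1600000 in
/-- Main theorem (negative binomial case): if a Stein's-method bound
`|E[p (r+W) g(W+1) - W g(W)]| ≤ C · sup_i |g(i+1) - g(i)|` holds for all bounded
`g : ℕ → ℝ` for a random variable `W` with values in `{0,...,n}`, then
`d_TV(L(W), NB^{[0,n]}(r,p)) ≤ C (1 - π₀)/(p r) ≤ C (1 - (1-p)^r)/(p r)`. -/
theorem truncNb_approximation {Ω : Type*} [MeasurableSpace Ω]
    (μ : Measure Ω) [IsProbabilityMeasure μ]
    (r p : ℝ) (hr : 0 < r) (hp0 : 0 < p) (hp1 : p < 1)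
    (n : ℕ) (W : Ω → ℕ) (hW : Measurable W) (hWn : ∀ ω, W ω ≤ n)
    (C : ℝ) (hC : 0 ≤ C)
    (hstein : ∀ g : ℕ → ℝ, (∃ M : ℝ, ∀ k : ℕ, |g k| ≤ M) →
      |∫ ω, (p * (r + (W ω : ℝ)) * g (W ω + 1) - (W ω : ℝ) * g (W ω)) ∂μ|
        ≤ C * ⨆ i : ℕ, |g (i + 1) - g i|) :
    (1 / 2) * ∑ i ∈ Finset.range (n + 1),
        |(μ {ω | W ω = i}).toReal - truncNbPmf r p n i|
      ≤ C * ((1 - truncNbPmf r p n 0) / (p * r)) ∧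
    C * ((1 - truncNbPmf r p n 0) / (p * r))
      ≤ C * ((1 - (1 - p) ^ r) / (p * r)) := by
  classical
  have hw : ∀ k, 0 < nbPmf r p k := nbPmf_pos hr hp0 hp1
  have hrec : ∀ k : ℕ, ((k:ℝ)+1) * nbPmf r p (k+1) = p * (r + k) * nbPmf r p k :=
    fun k => nbPmf_rec (p := p) hr k
  have hS1 : ∑ j ∈ Finset.range (n+1), nbPmf r p j ≤ 1 := sum_nbPmf_le_one hr hp0 hp1 (n+1)
  set w : ℕ → ℝ := nbPmf r p with hwdef
  set S := ∑ j ∈ Finset.range (n+1), w j with hSdef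
  have hS : 0 < S := Finset.sum_pos (fun i _ => hw i) ⟨0, Finset.mem_range.2 (Nat.succ_pos n)⟩
  have hpr : 0 < p * r := mul_pos hp0 hr
  set P : ℕ → ℝ := fun i => (μ {ω | W ω = i}).toReal with hPdef
  have hPfold : ∀ i : ℕ, (μ {ω | W ω = i}).toReal = P i := fun i => rfl
  set f : ℕ → ℝ := fun j => if P j - truncNbPmf r p n j < 0 then (-1:ℝ) else 1 with hfdef
  have hf1 : ∀ j, |f j| ≤ 1 := by
    intro j
    simp only [hfdef]
    split <;> simp
  set m : ℝ := (∑ i ∈ Finset.range (n+1), w i * f i) / S with hmdef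
  have hm' : m = (∑ i ∈ Finset.range (n+1), w i * f i) / (∑ i ∈ Finset.range (n+1), w i) := by
    rw [hmdef, hSdef]
  set A : ℕ → ℝ := fun t => (∑ i ∈ Finset.range t, w i * (f i - m)) / ((t:ℝ) * w t) with hAdef
  set g : ℕ → ℝ := fun t => if t = 0 then A 1 else A (min t (n+1)) with hgdef
  have hπ : ∀ i, truncNbPmf r p n i = w i / S := by
    intro i
    rw [hSdef, hwdef]
    rfl
  have hg0 : g 0 = A 1 := by simp [hgdef]
  have hgpos : ∀ t : ℕ, 1 ≤ t → t ≤ n + 1 → g t = A t := by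
    intro t ht1 htn
    simp only [hgdef, if_neg (by omega : ¬ t = 0), min_eq_left htn]
  have hgtop : ∀ t : ℕ, n + 1 ≤ t → g t = A (n+1) := by
    intro t ht
    simp only [hgdef, if_neg (by omega : ¬ t = 0), min_eq_right ht]
  -- Stein equation pointwise
  have hptk : ∀ k : ℕ, k ≤ n → p * (r + (k:ℝ)) * g (k+1) - (k:ℝ) * g k = f k - m := by
    intro k hkn
    rcases Nat.eq_zero_or_pos k with hk0 | hk0
    · subst hk0
      rw [hg0, hgpos 1 le_rfl (by omega)]
      have h0 := hrec 0
      simp only [Nat.cast_zero, zero_add, add_zero, one_mul] at h0 ⊢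
      simp only [hAdef]
      rw [Finset.range_one, Finset.sum_singleton, Nat.cast_one, one_mul, h0]
      field_simp [hp0.ne', hr.ne', (hw 0).ne', hS.ne']
      ring
    · rw [hgpos k hk0 (by omega), hgpos (k+1) (by omega) (by omega)]
      simp only [hAdef]
      rw [Finset.sum_range_succ (f := fun i => w i * (f i - m)) (n := k),
        show ((k+1:ℕ):ℝ) = (k:ℝ)+1 by push_cast; ring, hrec k]
      have hk0' : (0:ℝ) < (k:ℝ) := by exact_mod_cast hk0
      have hne : r + (k:ℝ) ≠ 0 := by positivity
      field_simp [hp0.ne', hne, (hw k).ne', hk0'.ne', hS.ne']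
      ring
  -- integral computations
  have hint1 : ∀ φ : ℕ → ℝ, ∫ ω, φ (W ω) ∂μ = ∑ i ∈ Finset.range (n+1), P i * φ i :=
    fun φ => integral_comp_nat μ W hW n hWn φ
  have hPsum : ∑ i ∈ Finset.range (n+1), P i = 1 := by
    have h := hint1 (fun _ => (1:ℝ))
    simp only [mul_one] at h
    rw [← h]
    simp
  have hITV : ∫ ω, (p * (r + (W ω : ℝ)) * g (W ω + 1) - (W ω : ℝ) * g (W ω)) ∂μ
      = ∑ i ∈ Finset.range (n+1), |P i - truncNbPmf r p n i| := by
    have e : (fun ω => p * (r + (W ω : ℝ)) * g (W ω + 1) - (W ω : ℝ) * g (W ω))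
        = fun ω => (fun k => f k - m) (W ω) := funext fun ω => hptk (W ω) (hWn ω)
    rw [e, hint1 (fun k => f k - m)]
    have hmval : m = ∑ i ∈ Finset.range (n+1), truncNbPmf r p n i * f i := by
      rw [hmdef, Finset.sum_div]
      apply Finset.sum_congr rfl
      intro i _
      rw [hπ i]
      ring
    calc ∑ i ∈ Finset.range (n+1), P i * (f i - m)
        = (∑ i ∈ Finset.range (n+1), P i * f i) - (∑ i ∈ Finset.range (n+1), P i) * m := by
          rw [Finset.sum_mul, ← Finset.sum_sub_distrib]
          exact Finset.sum_congr rfl fun i _ => by ring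
      _ = (∑ i ∈ Finset.range (n+1), P i * f i)
            - ∑ i ∈ Finset.range (n+1), truncNbPmf r p n i * f i := by
          rw [hPsum, one_mul, ← hmval]
      _ = ∑ i ∈ Finset.range (n+1), (P i * f i - truncNbPmf r p n i * f i) :=
          (Finset.sum_sub_distrib _ _).symm
      _ = ∑ i ∈ Finset.range (n+1), |P i - truncNbPmf r p n i| := by
          apply Finset.sum_congr rfl
          intro i _
          simp only [hfdef]
          by_cases h : P i - truncNbPmf r p n i < 0
          · rw [if_pos h, abs_of_neg h]; ring
          · rw [if_neg h, abs_of_nonneg (not_lt.1 h)]; ring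
  -- bound on increments of g
  have hw0S : w 0 ≤ S := by
    rw [hSdef]
    exact Finset.single_le_sum (f := fun i => w i) (fun i _ => (hw i).le)
      (Finset.mem_range.2 (Nat.succ_pos n))
  set B : ℝ := 2 * (S - w 0) / (S * (p * r)) with hBdef
  have hB0 : 0 ≤ B := by
    rw [hBdef]
    apply div_nonneg (by linarith) (by positivity)
  have hsup : ∀ i : ℕ, |g (i+1) - g i| ≤ B := by
    intro i
    rcases Nat.eq_zero_or_pos i with h0 | h0
    · subst h0
      rw [hg0, hgpos 1 le_rfl (by omega), sub_self, abs_zero]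
      exact hB0
    · by_cases hin : i ≤ n
      · rw [hgpos (i+1) (by omega) (by omega), hgpos i h0 (by omega), hBdef, hSdef]
        simp only [hAdef]
        exact core_bound hr hp0 hp1 hw hrec n f hf1 m hm' i h0 hin
      · rw [hgtop (i+1) (by omega), hgtop i (by omega), sub_self, abs_zero]
        exact hB0
  have hgbdd : ∃ M : ℝ, ∀ k : ℕ, |g k| ≤ M := by
    refine ⟨∑ t ∈ Finset.range (n+2), |A t|, fun k => ?_⟩
    have hterm : ∀ t ∈ Finset.range (n+2), (0:ℝ) ≤ |A t| := fun t _ => abs_nonneg _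
    rcases Nat.eq_zero_or_pos k with h0 | h0
    · subst h0
      rw [hg0]
      exact Finset.single_le_sum hterm (Finset.mem_range.2 (by omega))
    · by_cases hk : k ≤ n+1
      · rw [hgpos k h0 hk]
        exact Finset.single_le_sum hterm (Finset.mem_range.2 (by omega))
      · rw [hgtop k (by omega)]
        exact Finset.single_le_sum hterm (Finset.mem_range.2 (by omega))
  have hmain := hstein g hgbdd
  rw [hITV] at hmain
  have hsup' : (⨆ i : ℕ, |g (i+1) - g i|) ≤ B := ciSup_le hsup
  have hfinal : ∑ i ∈ Finset.range (n+1), |P i - truncNbPmf r p n i| ≤ C * B :=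
    le_trans (le_abs_self _) (le_trans hmain (mul_le_mul_of_nonneg_left hsup' hC))
  constructor
  · have hEq : C * B = 2 * (C * ((1 - truncNbPmf r p n 0) / (p * r))) := by
      rw [hBdef, hπ 0]
      field_simp
    simp only [hPfold]
    linarith [hfinal, hEq]
  · have hw0 : w 0 = (1-p)^r := by
      rw [hwdef]
      show nbPmf r p 0 = (1-p)^r
      unfold nbPmf
      simp [ne_of_gt (Real.Gamma_pos_of_pos hr)]
    have hπ0 : (1-p)^r ≤ truncNbPmf r p n 0 := by
      rw [hπ 0, hw0, le_div_iff₀ hS]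
      nlinarith [Real.rpow_pos_of_pos (by linarith : (0:ℝ) < 1-p) r, hS1]
    have hnum : (1 - truncNbPmf r p n 0) ≤ (1 - (1-p)^r) := by linarith
    gcongr
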